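/- Let A be a Banach algebra and D : A → A* a derivation with A* ⊆ D''(A**). If D'' : A** → A*** is a derivation, then A is Arens regular. -/

import Mathlib

/-- `NormedSpace.Dual` as it stood in the older Mathlib (since removed in favour of
`StrongDual`): the topological dual of a normed space. -/
abbrev NormedSpace.Dual (𝕜 : Type*) [NontriviallyNormedField 𝕜] (E : Type*)
    [SeminormedAddCommGroup E] [NormedSpace 𝕜 E] : Type _ :=
  E →L[𝕜] 𝕜

open ContinuousLinearMap NormedSpace

noncomputable section

section Defs

variable {X Y Z W : Type} [NormedAddCommGroup X] [NormedSpace ℝ X]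
  [NormedAddCommGroup Y] [NormedSpace ℝ Y] [NormedAddCommGroup Z] [NormedSpace ℝ Z]
  [NormedAddCommGroup W] [NormedSpace ℝ W]

/-- The first adjoint `m^*` of a bounded bilinear map `m : X × Y → Z`,
as a map `Z^* × X → Y^*`, `⟨m^*(z',x), y⟩ = ⟨z', m(x,y)⟩`. -/
def adj1 (m : X →L[ℝ] Y →L[ℝ] Z) :
    Dual ℝ Z →L[ℝ] X →L[ℝ] Dual ℝ Y :=
  (((ContinuousLinearMap.compL ℝ X (Y →L[ℝ] Z) (Dual ℝ Y)).flip m).comp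
    (ContinuousLinearMap.compL ℝ Y Z ℝ))

@[simp] lemma adj1_apply (m : X →L[ℝ] Y →L[ℝ] Z) (z' : Dual ℝ Z) (x : X) (y : Y) :
    adj1 m z' x y = z' (m x y) := rfl

/-- The first (left) Arens extension `m^{***} : X^{**} × Y^{**} → Z^{**}` of a
bounded bilinear map `m : X × Y → Z`. -/
def arens (m : X →L[ℝ] Y →L[ℝ] Z) :
    Dual ℝ (Dual ℝ X) →L[ℝ] Dual ℝ (Dual ℝ Y) →L[ℝ] Dual ℝ (Dual ℝ Z) :=
  adj1 (adj1 (adj1 m))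

/-- The adjoint (dual map) of a bounded linear map. -/
def dualMap' (D : X →L[ℝ] Y) : Dual ℝ Y →L[ℝ] Dual ℝ X :=
  (ContinuousLinearMap.compL ℝ X Y ℝ).flip D

@[simp] lemma dualMap'_apply (D : X →L[ℝ] Y) (g : Dual ℝ Y) (x : X) :
    dualMap' D g x = g (D x) := rfl

/-- The second adjoint `D'' : X^{**} → Y^{**}` of a bounded linear map. -/
def bidualMap (D : X →L[ℝ] Y) : Dual ℝ (Dual ℝ X) →L[ℝ] Dual ℝ (Dual ℝ Y) :=
  dualMap' (dualMap' D)

/-- Given an action `t : A × X → X`, the transposed action on the dual `X^*`: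
`(dualAct t) a f = f ∘ (t a)`. -/
def dualAct (t : W →L[ℝ] X →L[ℝ] X) : W →L[ℝ] Dual ℝ X →L[ℝ] Dual ℝ X :=
  ((ContinuousLinearMap.compL ℝ X X ℝ).flip).comp t

@[simp] lemma dualAct_apply (t : W →L[ℝ] X →L[ℝ] X) (a : W) (f : Dual ℝ X) (x : X) :
    dualAct t a f x = f (t a x) := rfl

/-- `D : A → X` is a derivation with respect to the multiplication `mul'` on `A`
and the left action `l` and right action `r` (`r a x` means `x · a`) of `A` on `X`. -/
def IsDer {A' : Type} [NormedAddCommGroup A'] [NormedSpace ℝ A']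
    (mul' : A' →L[ℝ] A' →L[ℝ] A') (l r : A' →L[ℝ] X →L[ℝ] X) (D : A' →L[ℝ] X) : Prop :=
  ∀ a b : A', D (mul' a b) = l a (D b) + r b (D a)

/-- `D : A → X` is an inner derivation: `D a = a·x - x·a` for some `x`. -/
def IsInner {A' : Type} [NormedAddCommGroup A'] [NormedSpace ℝ A']
    (l r : A' →L[ℝ] X →L[ℝ] X) (D : A' →L[ℝ] X) : Prop :=
  ∃ x : X, ∀ a : A', D a = l a x - r a x

/-- The bimodule axioms for actions `l`, `r` of an algebra with multiplication `mul'`. -/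
def IsBimod {A' : Type} [NormedAddCommGroup A'] [NormedSpace ℝ A']
    (mul' : A' →L[ℝ] A' →L[ℝ] A') (l r : A' →L[ℝ] X →L[ℝ] X) : Prop :=
  (∀ a b x, l (mul' a b) x = l a (l b x)) ∧
  (∀ a b x, r (mul' a b) x = r b (r a x)) ∧
  (∀ a b x, l a (r b x) = r b (l a x))

/-- weak*-to-weak* continuity of a map between dual spaces. -/
def WStarCont (f : Dual ℝ X → Dual ℝ Y) : Prop :=
  ∀ y : Y, Continuous fun φ : WeakDual ℝ X => f φ y

end Defs

/-- A packaged Banach `A`-bimodule (used to form iterated duals). -/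
structure ModPk (A : Type) [NormedAddCommGroup A] [NormedSpace ℝ A] : Type 1 where
  X : Type
  [grp : NormedAddCommGroup X]
  [mod : NormedSpace ℝ X]
  l : A →L[ℝ] X →L[ℝ] X
  r : A →L[ℝ] X →L[ℝ] X

attribute [instance] ModPk.grp ModPk.mod

variable {A : Type} [NormedAddCommGroup A] [NormedSpace ℝ A]

/-- The canonical dual of a packaged bimodule. -/
def ModPk.dual (P : ModPk A) : ModPk A :=
  ⟨Dual ℝ P.X, dualAct P.r, dualAct P.l⟩

/-- The `n`-th iterated dual of a packaged bimodule. -/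
def ModPk.iter (P : ModPk A) : ℕ → ModPk A
  | 0 => P
  | n+1 => (P.iter n).dual

/-- A "level": an algebra (given by its bilinear multiplication) together with a bimodule. -/
structure Lvl : Type 1 where
  Alg : Type
  [g1 : NormedAddCommGroup Alg]
  [m1 : NormedSpace ℝ Alg]
  Mod : Type
  [g2 : NormedAddCommGroup Mod]
  [m2 : NormedSpace ℝ Mod]
  mul : Alg →L[ℝ] Alg →L[ℝ] Alg
  l : Alg →L[ℝ] Mod →L[ℝ] Mod
  r : Alg →L[ℝ] Mod →L[ℝ] Mod

attribute [instance] Lvl.g1 Lvl.m1 Lvl.g2 Lvl.m2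

/-- Passing to second duals: `A^{**}` with the first Arens product, acting on `B^{**}`
via the Arens extensions `π_ℓ^{***}` and `π_r^{***}` of the module actions. -/
def Lvl.double (Q : Lvl) : Lvl where
  Alg := Dual ℝ (Dual ℝ Q.Alg)
  Mod := Dual ℝ (Dual ℝ Q.Mod)
  mul := arens Q.mul
  l := arens Q.l
  r := (arens Q.r.flip).flip

/-- Iterated even duals: `Lvl.iter Q n` is the level `(A^{(2n)}, B^{(2n)})`. -/
def Lvl.iter (Q : Lvl) : ℕ → Lvl
  | 0 => Q
  | n+1 => (Q.iter n).double

/-- The canonical embedding `A → A^{(2n)}`. -/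
def Lvl.embA (Q : Lvl) : (n : ℕ) → Q.Alg →L[ℝ] (Q.iter n).Alg
  | 0 => ContinuousLinearMap.id ℝ _
  | n+1 => (inclusionInDoubleDual ℝ ((Q.iter n).Alg)).comp (Q.embA n)

/-- The canonical embedding `B → B^{(2n)}`. -/
def Lvl.embM (Q : Lvl) : (n : ℕ) → Q.Mod →L[ℝ] (Q.iter n).Mod
  | 0 => ContinuousLinearMap.id ℝ _
  | n+1 => (inclusionInDoubleDual ℝ ((Q.iter n).Mod)).comp (Q.embM n)

/-- The left-topological-center condition `Z^ℓ_{A^{(2n+2)}}(B^{(2n+2)}) = B^{(2n+2)}`,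
stated at the double of a level `Q`: for each `b` in the second-dual module, the map
`a ↦ b·a` is weak*-to-weak* continuous. -/
def Lvl.doubleZl (Q : Lvl) : Prop :=
  ∀ b : (Q.double).Mod, WStarCont (X := Dual ℝ Q.Alg) (Y := Dual ℝ Q.Mod)
    (fun a => (Q.double).r a b)

/-- The base level of a Banach algebra `A` with a Banach `A`-bimodule `B`. -/
def lvlOf (A : Type) [NormedRing A] [NormedAlgebra ℝ A]
    (B : Type) [NormedAddCommGroup B] [NormedSpace ℝ B]
    (l r : A →L[ℝ] B →L[ℝ] B) : Lvl :=
  Lvl.mk A B (ContinuousLinearMap.mul ℝ A) l r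
set_option maxHeartbeats 2000000 in
/-- **Corollary 2-31.** Let `A` be a Banach algebra and `D : A → A*` a derivation with
`A* ⊆ D''(A**)`. If `D'' : A** → A***` is a derivation, then `A` is Arens regular. -/
theorem stmt17 (A : Type) [NormedRing A] [NormedAlgebra ℝ A] [CompleteSpace A]
    (D : A →L[ℝ] Dual ℝ A)
    (hD : IsDer (ContinuousLinearMap.mul ℝ A)
      (dualAct (ContinuousLinearMap.mul ℝ A).flip) (dualAct (ContinuousLinearMap.mul ℝ A)) D)
    -- `A* ⊆ D''(A**)`
    (hsub : ∀ a' : Dual ℝ A, ∃ F : Dual ℝ (Dual ℝ A),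
      bidualMap D F = inclusionInDoubleDual ℝ (Dual ℝ A) a')
    -- `D'' : A** → A***` is a derivation
    (hD'' : IsDer (arens (ContinuousLinearMap.mul ℝ A))
      (dualAct (W := Dual ℝ (Dual ℝ A)) (X := Dual ℝ (Dual ℝ A))
        ((arens (ContinuousLinearMap.mul ℝ A).flip.flip).flip))
      (dualAct (W := Dual ℝ (Dual ℝ A)) (X := Dual ℝ (Dual ℝ A))
        (arens (ContinuousLinearMap.mul ℝ A)))
      (bidualMap D)) :
    -- `A` is Arens regular
    ∀ F G : Dual ℝ (Dual ℝ A),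
      arens (ContinuousLinearMap.mul ℝ A) F G =
        arens (ContinuousLinearMap.mul ℝ A).flip G F := by
  intro F G
  set m := ContinuousLinearMap.mul ℝ A with hm
  ext f
  obtain ⟨F₀, hF₀⟩ := hsub f
  have hc : ∀ Φ : Dual ℝ (Dual ℝ A), F₀ (dualMap' D Φ) = Φ f := by
    intro Φ
    have h1 := congrArg (fun T : Dual ℝ (Dual ℝ (Dual ℝ A)) => T Φ) hF₀
    simpa [bidualMap, dual_def] using h1
  have key := congrArg (fun T : Dual ℝ (Dual ℝ (Dual ℝ A)) => T F) (hD'' G F₀)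
  simp only [ContinuousLinearMap.flip_flip, ContinuousLinearMap.add_apply, dualAct_apply,
    ContinuousLinearMap.flip_apply, bidualMap, dualMap'_apply] at key
  -- key should now be:
  -- arens m G F₀ (dualMap' D F) = F₀ (dualMap' D (arens m F G)) + G (dualMap' D (arens m F₀ F))
  rw [hc (arens m F G)] at key
  -- key : arens m G F₀ (dualMap' D F) = arens m F G f + G (dualMap' D (arens m F₀ F))
  have main : adj1 (adj1 m) F₀ (dualMap' D F)
      = adj1 (adj1 m.flip) F f + dualMap' D (arens m F₀ F) := by
    ext a
    have hsplit : adj1 m (dualMap' D F) a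
        = dualMap' D (F.comp (dualAct m.flip a)) + adj1 (adj1 m) F (D a) := by
      ext b
      have hd := congrArg F (hD a b)
      simp only [map_add] at hd
      simp [adj1_apply, dualMap'_apply]
      exact hd
    have e1 : adj1 (adj1 m) F₀ (dualMap' D F) a
        = F₀ (dualMap' D (F.comp (dualAct m.flip a))) + F₀ (adj1 (adj1 m) F (D a)) := by
      have : adj1 (adj1 m) F₀ (dualMap' D F) a = F₀ (adj1 m (dualMap' D F) a) := rfl
      rw [this, hsplit, map_add]
    rw [e1, hc (F.comp (dualAct m.flip a))]
    have e2 : (F.comp (dualAct m.flip a)) f = F (adj1 m.flip f a) := by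
      rw [ContinuousLinearMap.comp_apply]
      exact congrArg F (ContinuousLinearMap.ext fun c => rfl)
    have e3 : F₀ (adj1 (adj1 m) F (D a)) = dualMap' D (arens m F₀ F) a := rfl
    rw [e2, e3]
    rfl
  have lhs_eq : arens m G F₀ (dualMap' D F)
      = arens m.flip G F f + G (dualMap' D (arens m F₀ F)) := by
    have h0 : arens m G F₀ (dualMap' D F) = G (adj1 (adj1 m) F₀ (dualMap' D F)) := rfl
    rw [h0, main, map_add]
    rfl
  have := key.symm.trans lhs_eq
  exact add_right_cancel this
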